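/- Consider the optimization of E[e^{λX}] over two-point distributions on [-1,1] with mean 0 and second moment ε² ≤ 1, i.e., over probability measures pδ_a + (1-p)δ_b with a < b in [-1,1], pa + (1-p)b = 0, and pa² + (1-p)b² = ε². For λ ≥ 0 the maximum is attained at a = -ε², b = 1, p = 1/(1+ε²), giving value (e^{-λε²} + ε² e^{λ})/(1 + ε²). -/

import Mathlib

open Real

/-- The quadratic coefficient of the certificate. -/
noncomputable def tpCf (lam s : ℝ) : ℝ :=
  (Real.exp lam - Real.exp (-(lam*s)) * (1 + lam*(1+s))) / (1+s)^2

/-- `r x = q x - exp (lam x)` where `q` is the quadratic certificate. -/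
noncomputable def tpR (lam s : ℝ) (x : ℝ) : ℝ :=
  Real.exp (-(lam*s)) * (1 + lam*(x+s)) + tpCf lam s * (x+s)^2 - Real.exp (lam*x)

/-- Derivative of `tpR`. -/
noncomputable def tpR' (lam s : ℝ) (x : ℝ) : ℝ :=
  Real.exp (-(lam*s)) * lam + tpCf lam s * (2*(x+s)) - lam * Real.exp (lam*x)

lemma tpR_hasDeriv (lam s : ℝ) (x : ℝ) :
    HasDerivAt (tpR lam s) (tpR' lam s x) x := by
  have hxs : HasDerivAt (fun y : ℝ => y + s) 1 x := (hasDerivAt_id x).add_const s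
  have hsq : HasDerivAt (fun y : ℝ => (y+s)^2) ((2:ℕ) * (x+s)^(2-1) * 1) x := hxs.pow 2
  have hexp : HasDerivAt (fun y : ℝ => Real.exp (lam*y)) (Real.exp (lam*x) * lam) x := by
    have h1 : HasDerivAt (fun y : ℝ => lam*y) (lam * 1) x := (hasDerivAt_id x).const_mul lam
    have := (Real.hasDerivAt_exp (lam*x)).comp x h1
    rw [mul_one] at this; exact this
  have h2 : HasDerivAt (fun y : ℝ => Real.exp (-(lam*s)) * (1 + lam*(y+s)))
      (Real.exp (-(lam*s)) * (lam * 1)) x := by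
    have : HasDerivAt (fun y : ℝ => 1 + lam*(y+s)) (lam * 1) x :=
      (hxs.const_mul lam).const_add 1
    exact this.const_mul _
  have h3 := (h2.add (hsq.const_mul (tpCf lam s))).sub hexp
  have h4 : Real.exp (-(lam*s)) * (lam*1) + tpCf lam s * ((2:ℕ) * (x+s)^(2-1) * 1)
      - Real.exp (lam*x) * lam = tpR' lam s x := by
    simp [tpR']; ring
  rw [h4] at h3
  exact h3

lemma tpR'_hasDeriv_exists (lam s : ℝ) (x : ℝ) : DifferentiableAt ℝ (tpR lam s) x :=
  (tpR_hasDeriv lam s x).differentiableAt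

lemma tpR_cont (lam s : ℝ) : Continuous (tpR lam s) := by
  unfold tpR tpCf; fun_prop

lemma tpR_deriv (lam s : ℝ) : deriv (tpR lam s) = tpR' lam s :=
  funext fun x => (tpR_hasDeriv lam s x).deriv

lemma tpR_at_m (lam s : ℝ) : tpR lam s (-s) = 0 := by
  simp only [tpR]
  rw [show lam * -s = -(lam*s) by ring]
  ring

lemma tpR_at_one (lam s : ℝ) (hs : 0 < 1 + s) : tpR lam s 1 = 0 := by
  have h2 : ((1:ℝ)+s)^2 ≠ 0 := by positivity
  simp only [tpR, tpCf, mul_one]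
  field_simp
  ring

lemma tpR'_at_m (lam s : ℝ) : tpR' lam s (-s) = 0 := by
  simp only [tpR']
  rw [show lam * -s = -(lam*s) by ring]
  ring

/-- concavity-type inequality for `tpR'`. -/
lemma tpR'_concave (lam s : ℝ) (hlam : 0 ≤ lam) (x y θ : ℝ) (h0 : 0 ≤ θ) (h1 : θ ≤ 1) :
    θ * tpR' lam s x + (1-θ) * tpR' lam s y ≤ tpR' lam s (θ*x + (1-θ)*y) := by
  have hexpc := convexOn_exp.2 (Set.mem_univ (lam*x)) (Set.mem_univ (lam*y)) h0
    (by linarith : (0:ℝ) ≤ 1-θ) (by ring)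
  simp only [smul_eq_mul] at hexpc
  rw [show θ*(lam*x) + (1-θ)*(lam*y) = lam*(θ*x+(1-θ)*y) by ring] at hexpc
  have := mul_le_mul_of_nonneg_left hexpc hlam
  simp only [tpR']
  nlinarith [this]

/-- helper: if derivative nonneg on `[a,b]` then `f a ≤ f b`. -/
lemma mono_helper (lam s : ℝ) {a b : ℝ} (hab : a ≤ b)
    (hsign : ∀ x ∈ Set.Icc a b, 0 ≤ tpR' lam s x) : tpR lam s a ≤ tpR lam s b := by
  have := monotoneOn_of_deriv_nonneg (convex_Icc a b) ((tpR_cont lam s).continuousOn)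
    (fun x _ => ((tpR_hasDeriv lam s x).differentiableAt).differentiableWithinAt)
    (fun x hx => by
      rw [tpR_deriv]
      exact hsign x (interior_subset hx))
  exact this (Set.left_mem_Icc.2 hab) (Set.right_mem_Icc.2 hab) hab

lemma anti_helper (lam s : ℝ) {a b : ℝ} (hab : a ≤ b)
    (hsign : ∀ x ∈ Set.Icc a b, tpR' lam s x ≤ 0) : tpR lam s b ≤ tpR lam s a := by
  have := antitoneOn_of_deriv_nonpos (convex_Icc a b) ((tpR_cont lam s).continuousOn)
    (fun x _ => ((tpR_hasDeriv lam s x).differentiableAt).differentiableWithinAt)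
    (fun x hx => by
      rw [tpR_deriv]
      exact hsign x (interior_subset hx))
  exact this (Set.left_mem_Icc.2 hab) (Set.right_mem_Icc.2 hab) hab

/-- Key lemma: the certificate dominates the exponential on `[-1,1]`. -/
lemma tpR_nonneg (lam s : ℝ) (hlam : 0 ≤ lam) (hs0 : 0 < s) (hs1 : s ≤ 1) :
    ∀ x ∈ Set.Icc (-1:ℝ) 1, 0 ≤ tpR lam s x := by
  have hm1 : (-1:ℝ) ≤ -s := by linarith
  have hms : -s < 1 := by linarith
  -- Rolle: get c in (-s, 1) with r' c = 0
  obtain ⟨c, hc, hc0⟩ := exists_deriv_eq_zero hms ((tpR_cont lam s).continuousOn)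
    (by rw [tpR_at_m, tpR_at_one lam s (by linarith)])
  rw [tpR_deriv] at hc0
  obtain ⟨hcm, hc1⟩ := hc
  -- sign of r' from concavity: r'(-s)=0, r'(c)=0, -s < c
  have hsign_right : ∀ x, -s ≤ x → x ≤ c → 0 ≤ tpR' lam s x := by
    intro x hx1 hx2
    set θ := (c - x)/(c - (-s)) with hθ
    have hden : 0 < c - (-s) := by linarith
    have h0 : 0 ≤ θ := div_nonneg (by linarith) (by linarith)
    have h1 : θ ≤ 1 := by rw [div_le_one hden]; linarith
    have hne : c + s ≠ 0 := by linarith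
    have hcomb : θ*(-s) + (1-θ)*c = x := by
      rw [hθ]; field_simp; ring
    have := tpR'_concave lam s hlam (-s) c θ h0 h1
    rw [hcomb, tpR'_at_m lam s, hc0] at this
    linarith
  have hsign_left : ∀ x, -1 ≤ x → x ≤ -s → tpR' lam s x ≤ 0 := by
    intro x hx1 hx2
    rcases eq_or_lt_of_le hx2 with h | h
    · rw [h, tpR'_at_m]
    · set θ := (c - (-s))/(c - x) with hθ
      have hden : 0 < c - x := by linarith
      have h0pos : 0 < θ := div_pos (by linarith) hden
      have h1 : θ ≤ 1 := by rw [div_le_one hden]; linarith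
      have hne : c - x ≠ 0 := ne_of_gt hden
      have hcomb : θ*x + (1-θ)*c = -s := by
        rw [hθ]; field_simp; ring
      have := tpR'_concave lam s hlam x c θ (le_of_lt h0pos) h1
      rw [hcomb, tpR'_at_m lam s, hc0] at this
      nlinarith
  have hsign_far : ∀ x, c ≤ x → x ≤ 1 → tpR' lam s x ≤ 0 := by
    intro x hx1 hx2
    rcases eq_or_lt_of_le hx1 with h | h
    · rw [← h, hc0]
    · set θ := (x - c)/(x - (-s)) with hθ
      have hden : 0 < x - (-s) := by linarith
      have h0 : 0 ≤ θ := div_nonneg (by linarith) (le_of_lt hden)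
      have h1lt : θ < 1 := by rw [div_lt_one hden]; linarith
      have hne : x + s ≠ 0 := by linarith
      have hcomb : θ*(-s) + (1-θ)*x = c := by
        rw [hθ]; field_simp; ring
      have := tpR'_concave lam s hlam (-s) x θ h0 (le_of_lt h1lt)
      rw [hcomb, tpR'_at_m lam s, hc0] at this
      nlinarith
  intro x hx
  obtain ⟨hxl, hxr⟩ := hx
  rcases le_total x (-s) with h | h
  · -- decreasing towards -s, r(-s)=0
    have := anti_helper lam s h (fun y hy => hsign_left y (le_trans hxl hy.1) hy.2)
    rw [tpR_at_m] at this
    linarith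
  · rcases le_total x c with h2 | h2
    · have := mono_helper lam s h (fun y hy => hsign_right y hy.1 (le_trans hy.2 h2))
      rw [tpR_at_m] at this
      linarith
    · have := anti_helper lam s hxr (fun y hy => hsign_far y (le_trans h2 hy.1) hy.2)
      rw [tpR_at_one lam s (by linarith)] at this
      linarith

/-- Over two-point distributions `p δ_a + (1-p) δ_b` on `[-1,1]` with mean `0`
and second moment `ε² ≤ 1`, the value `E[exp (λ X)]` (for `λ ≥ 0`) is maximized at
`a = -ε²`, `b = 1`, `p = 1/(1+ε²)`, where it equals `(exp (-λ ε²) + ε² exp λ)/(1 + ε²)`. -/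
theorem two_point_mgf_max (lam ε : ℝ) (hlam : 0 ≤ lam) (hε : 0 < ε) (hε1 : ε ≤ 1) :
    (∀ a b p : ℝ, -1 ≤ a → a < b → b ≤ 1 → 0 ≤ p → p ≤ 1 →
        p * a + (1 - p) * b = 0 → p * a ^ 2 + (1 - p) * b ^ 2 = ε ^ 2 →
        p * Real.exp (lam * a) + (1 - p) * Real.exp (lam * b)
          ≤ (Real.exp (-lam * ε ^ 2) + ε ^ 2 * Real.exp lam) / (1 + ε ^ 2)) ∧
    (1 / (1 + ε ^ 2)) * Real.exp (lam * (-ε ^ 2))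
        + (ε ^ 2 / (1 + ε ^ 2)) * Real.exp (lam * 1)
      = (Real.exp (-lam * ε ^ 2) + ε ^ 2 * Real.exp lam) / (1 + ε ^ 2) := by
  have hε2 : (0:ℝ) < ε^2 := by positivity
  have hε21 : ε^2 ≤ 1 := by nlinarith
  have hden : (0:ℝ) < 1 + ε^2 := by linarith
  constructor
  · intro a b p ha hab hb hp hp1 hmean hvar
    set s := ε^2 with hs
    have ha1 : a ≤ 1 := le_trans (le_of_lt hab) hb
    have hbm1 : -1 ≤ b := le_trans ha (le_of_lt hab)
    have hra := tpR_nonneg lam s hlam hε2 hε21 a ⟨ha, ha1⟩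
    have hrb := tpR_nonneg lam s hlam hε2 hε21 b ⟨hbm1, hb⟩
    have hq : p * Real.exp (lam*a) + (1-p) * Real.exp (lam*b)
        ≤ p * (Real.exp (-(lam*s)) * (1 + lam*(a+s)) + tpCf lam s * (a+s)^2)
          + (1-p) * (Real.exp (-(lam*s)) * (1 + lam*(b+s)) + tpCf lam s * (b+s)^2) := by
      have h1 : Real.exp (lam*a) ≤ Real.exp (-(lam*s)) * (1 + lam*(a+s)) + tpCf lam s * (a+s)^2 := by
        have := hra; simp only [tpR] at this; linarith
      have h2 : Real.exp (lam*b) ≤ Real.exp (-(lam*s)) * (1 + lam*(b+s)) + tpCf lam s * (b+s)^2 := by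
        have := hrb; simp only [tpR] at this; linarith
      have := add_le_add (mul_le_mul_of_nonneg_left h1 hp)
        (mul_le_mul_of_nonneg_left h2 (by linarith : (0:ℝ) ≤ 1-p))
      exact this
    have hqval : p * (Real.exp (-(lam*s)) * (1 + lam*(a+s)) + tpCf lam s * (a+s)^2)
          + (1-p) * (Real.exp (-(lam*s)) * (1 + lam*(b+s)) + tpCf lam s * (b+s)^2)
        = Real.exp (-(lam*s)) * (1 + lam*s) + tpCf lam s * (s*(1+s)) := by
      have hvar' : p * a ^ 2 + (1 - p) * b ^ 2 = s := hvar
      linear_combination (Real.exp (-(lam*s)) * lam + 2 * tpCf lam s * s) * hmean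
        + tpCf lam s * hvar'
    have hfin : Real.exp (-(lam*s)) * (1 + lam*s) + tpCf lam s * (s*(1+s))
        = (Real.exp (-lam * s) + s * Real.exp lam) / (1 + s) := by
      rw [show -lam * s = -(lam*s) by ring]
      simp only [tpCf]
      have h1 : (1:ℝ) + s ≠ 0 := by positivity
      field_simp
      ring
    calc p * Real.exp (lam*a) + (1-p) * Real.exp (lam*b)
        ≤ _ := hq
      _ = _ := hqval.trans hfin
  · rw [show lam * (-ε^2) = -lam * ε^2 by ring, mul_one]
    field_simp
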